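/- (Peterson's equations, i.e. the Codazzi–Mainardi equations.) For a smooth immersed parametrized surface r : U → ℝ³, setting Δ = L/√(EG − F²), Δ' = M/√(EG − F²), Δ'' = N/√(EG − F²), the following two identities hold at every point of U: ∂Δ/∂v − ∂Δ'/∂u + Γ²₂₂·Δ − 2Γ²₁₂·Δ' + Γ²₁₁·Δ'' = 0, and ∂Δ''/∂u − ∂Δ'/∂v + Γ¹₂₂·Δ − 2Γ¹₁₂·Δ' + Γ¹₁₁·Δ'' = 0. -/

import Mathlib

noncomputable section

/-- Euclidean dot product on `ℝ³`. -/
def dot3 (x y : Fin 3 → ℝ) : ℝ := ∑ i, x i * y i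

/-- Partial derivative with respect to the first coordinate `u`. -/
def pdu {E : Type*} [NormedAddCommGroup E] [NormedSpace ℝ E]
    (f : ℝ × ℝ → E) (p : ℝ × ℝ) : E := fderiv ℝ f p (1, 0)

/-- Partial derivative with respect to the second coordinate `v`. -/
def pdv {E : Type*} [NormedAddCommGroup E] [NormedSpace ℝ E]
    (f : ℝ × ℝ → E) (p : ℝ × ℝ) : E := fderiv ℝ f p (0, 1)

variable (r : ℝ × ℝ → Fin 3 → ℝ)

/-- Coefficient `E = ⟨r_u, r_u⟩` of the first fundamental form. -/
def Ec (p : ℝ × ℝ) : ℝ := dot3 (pdu r p) (pdu r p)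

/-- Coefficient `F = ⟨r_u, r_v⟩` of the first fundamental form. -/
def Fc (p : ℝ × ℝ) : ℝ := dot3 (pdu r p) (pdv r p)

/-- Coefficient `G = ⟨r_v, r_v⟩` of the first fundamental form. -/
def Gc (p : ℝ × ℝ) : ℝ := dot3 (pdv r p) (pdv r p)

/-- `W = √(EG − F²)`. -/
def Wc (p : ℝ × ℝ) : ℝ := Real.sqrt (Ec r p * Gc r p - Fc r p ^ 2)

/-- Unit normal `n = (r_u × r_v)/W`. -/
def nc (p : ℝ × ℝ) : Fin 3 → ℝ := (Wc r p)⁻¹ • (crossProduct (pdu r p) (pdv r p))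

/-- Coefficient `L = ⟨r_uu, n⟩` of the second fundamental form. -/
def Lc (p : ℝ × ℝ) : ℝ := dot3 (pdu (pdu r) p) (nc r p)

/-- Coefficient `M = ⟨r_uv, n⟩` of the second fundamental form. -/
def Mc (p : ℝ × ℝ) : ℝ := dot3 (pdv (pdu r) p) (nc r p)

/-- Coefficient `N = ⟨r_vv, n⟩` of the second fundamental form. -/
def Nc (p : ℝ × ℝ) : ℝ := dot3 (pdv (pdv r) p) (nc r p)

/-- Christoffel symbol `Γ¹₁₁`. -/
def Γ111 (p : ℝ × ℝ) : ℝ :=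
  (Gc r p * pdu (Ec r) p - 2 * Fc r p * pdu (Fc r) p + Fc r p * pdv (Ec r) p) /
    (2 * Wc r p ^ 2)

/-- Christoffel symbol `Γ²₁₁`. -/
def Γ211 (p : ℝ × ℝ) : ℝ :=
  (2 * Ec r p * pdu (Fc r) p - Ec r p * pdv (Ec r) p - Fc r p * pdu (Ec r) p) /
    (2 * Wc r p ^ 2)

/-- Christoffel symbol `Γ¹₁₂`. -/
def Γ112 (p : ℝ × ℝ) : ℝ :=
  (Gc r p * pdv (Ec r) p - Fc r p * pdu (Gc r) p) / (2 * Wc r p ^ 2)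

/-- Christoffel symbol `Γ²₁₂`. -/
def Γ212 (p : ℝ × ℝ) : ℝ :=
  (Ec r p * pdu (Gc r) p - Fc r p * pdv (Ec r) p) / (2 * Wc r p ^ 2)

/-- Christoffel symbol `Γ¹₂₂`. -/
def Γ122 (p : ℝ × ℝ) : ℝ :=
  (2 * Gc r p * pdv (Fc r) p - Gc r p * pdu (Gc r) p - Fc r p * pdv (Gc r) p) /
    (2 * Wc r p ^ 2)

/-- Christoffel symbol `Γ²₂₂`. -/
def Γ222 (p : ℝ × ℝ) : ℝ :=
  (Ec r p * pdv (Gc r) p - 2 * Fc r p * pdv (Fc r) p + Fc r p * pdu (Gc r) p) /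
    (2 * Wc r p ^ 2)

/-- `Δ = L/√(EG − F²)`. -/
def Δ0 (p : ℝ × ℝ) : ℝ := Lc r p / Wc r p

/-- `Δ' = M/√(EG − F²)`. -/
def Δ1 (p : ℝ × ℝ) : ℝ := Mc r p / Wc r p

/-- `Δ'' = N/√(EG − F²)`. -/
def Δ2 (p : ℝ × ℝ) : ℝ := Nc r p / Wc r p

namespace CMaux

/-! ### Scalar directional derivative rules -/

variable {p w : ℝ × ℝ} {s t : ℝ × ℝ → ℝ}

theorem dd_add (hs : DifferentiableAt ℝ s p) (ht : DifferentiableAt ℝ t p) (w : ℝ × ℝ) :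
    fderiv ℝ (fun q => s q + t q) p w = fderiv ℝ s p w + fderiv ℝ t p w := by
  rw [fderiv_fun_add hs ht]; rfl

theorem dd_sub (hs : DifferentiableAt ℝ s p) (ht : DifferentiableAt ℝ t p) (w : ℝ × ℝ) :
    fderiv ℝ (fun q => s q - t q) p w = fderiv ℝ s p w - fderiv ℝ t p w := by
  rw [fderiv_fun_sub hs ht]; rfl

theorem dd_mul (hs : DifferentiableAt ℝ s p) (ht : DifferentiableAt ℝ t p) (w : ℝ × ℝ) :
    fderiv ℝ (fun q => s q * t q) p w
      = fderiv ℝ s p w * t p + s p * fderiv ℝ t p w := by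
  rw [fderiv_fun_mul hs ht]
  simp [ContinuousLinearMap.add_apply, ContinuousLinearMap.smul_apply, smul_eq_mul]
  ring

theorem dd_pow2 (hs : DifferentiableAt ℝ s p) (w : ℝ × ℝ) :
    fderiv ℝ (fun q => s q ^ 2) p w = 2 * s p * fderiv ℝ s p w := by
  have : (fun q => s q ^ 2) = fun q => s q * s q := by funext q; ring
  rw [this, dd_mul hs hs]; ring

theorem dd_div (hs : DifferentiableAt ℝ s p) (ht : DifferentiableAt ℝ t p)
    (h0 : t p ≠ 0) (w : ℝ × ℝ) :
    fderiv ℝ (fun q => s q / t q) p w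
      = (fderiv ℝ t p w * s p - t p * fderiv ℝ s p w) * (-(t p ^ 2)⁻¹) := by
  have hinv : HasFDerivAt (fun q => (t q)⁻¹) ((-(t p ^ 2)⁻¹) • (fderiv ℝ t p)) p := by
    exact
      (hasDerivAt_inv h0).comp_hasFDerivAt p ht.hasFDerivAt
  have hmul := hs.hasFDerivAt.fun_mul hinv
  have heq : (fun q => s q * (t q)⁻¹) = fun q => s q / t q := by
    funext q; rw [div_eq_mul_inv]
  rw [heq] at hmul
  rw [hmul.fderiv]
  simp only [ContinuousLinearMap.add_apply, ContinuousLinearMap.smul_apply, smul_eq_mul]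
  field_simp
  ring

/-! ### Vector-valued helpers -/

variable {f g h : ℝ × ℝ → Fin 3 → ℝ}

theorem dd_apply (hf : DifferentiableAt ℝ f p) (w : ℝ × ℝ) (i : Fin 3) :
    fderiv ℝ f p w i = fderiv ℝ (fun q => f q i) p w := by
  have hc := ((ContinuousLinearMap.proj (R := ℝ) (φ := fun _ : Fin 3 => ℝ) i).hasFDerivAt
      (x := f p)).comp p hf.hasFDerivAt
  calc fderiv ℝ f p w i
      = ((ContinuousLinearMap.proj (R := ℝ) (φ := fun _ : Fin 3 => ℝ) i).comp
          (fderiv ℝ f p)) w := rfl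
    _ = fderiv ℝ ((ContinuousLinearMap.proj (R := ℝ) (φ := fun _ : Fin 3 => ℝ) i) ∘ f) p w := by
        rw [hc.fderiv]
    _ = fderiv ℝ (fun q => f q i) p w := rfl

theorem diff_comp (hf : DifferentiableAt ℝ f p) (i : Fin 3) :
    DifferentiableAt ℝ (fun q => f q i) p :=
  ((ContinuousLinearMap.proj (R := ℝ) (φ := fun _ : Fin 3 => ℝ) i).differentiable.differentiableAt).comp p hf

theorem diff_dot3 (hf : DifferentiableAt ℝ f p) (hg : DifferentiableAt ℝ g p) :
    DifferentiableAt ℝ (fun q => dot3 (f q) (g q)) p := by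
  have e : (fun q => dot3 (f q) (g q))
      = fun q => (f q 0 * g q 0 + f q 1 * g q 1) + f q 2 * g q 2 := by
    funext q; simp only [dot3, Fin.sum_univ_three]
  rw [e]
  exact (((diff_comp hf 0).mul (diff_comp hg 0)).add
    ((diff_comp hf 1).mul (diff_comp hg 1))).add ((diff_comp hf 2).mul (diff_comp hg 2))

theorem dd_dot3 (hf : DifferentiableAt ℝ f p) (hg : DifferentiableAt ℝ g p) (w : ℝ × ℝ) :
    fderiv ℝ (fun q => dot3 (f q) (g q)) p w
      = dot3 (fderiv ℝ f p w) (g p) + dot3 (f p) (fderiv ℝ g p w) := by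
  have e : (fun q => dot3 (f q) (g q))
      = fun q => (f q 0 * g q 0 + f q 1 * g q 1) + f q 2 * g q 2 := by
    funext q; simp only [dot3, Fin.sum_univ_three]
  rw [e, dd_add (((diff_comp hf 0).fun_mul (diff_comp hg 0)).fun_add
      ((diff_comp hf 1).fun_mul (diff_comp hg 1))) ((diff_comp hf 2).fun_mul (diff_comp hg 2)),
    dd_add ((diff_comp hf 0).fun_mul (diff_comp hg 0)) ((diff_comp hf 1).fun_mul (diff_comp hg 1)),
    dd_mul (diff_comp hf 0) (diff_comp hg 0), dd_mul (diff_comp hf 1) (diff_comp hg 1),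
    dd_mul (diff_comp hf 2) (diff_comp hg 2)]
  simp only [dot3, Fin.sum_univ_three, dd_apply hf w, dd_apply hg w]
  ring

theorem diff_det3 (hf : DifferentiableAt ℝ f p) (hg : DifferentiableAt ℝ g p)
    (hh : DifferentiableAt ℝ h p) :
    DifferentiableAt ℝ (fun q => dot3 (f q) (crossProduct (g q) (h q))) p := by
  have e : (fun q => dot3 (f q) (crossProduct (g q) (h q)))
      = fun q => (f q 0 * (g q 1 * h q 2 - g q 2 * h q 1)
          + f q 1 * (g q 2 * h q 0 - g q 0 * h q 2))
          + f q 2 * (g q 0 * h q 1 - g q 1 * h q 0) := by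
    funext q
    simp only [dot3, cross_apply, Fin.sum_univ_three, Matrix.cons_val_zero, Matrix.cons_val_one,
      Matrix.head_cons, Matrix.cons_val_two, Matrix.tail_cons]
  rw [e]
  exact (((diff_comp hf 0).mul (((diff_comp hg 1).mul (diff_comp hh 2)).sub
      ((diff_comp hg 2).mul (diff_comp hh 1)))).add
    ((diff_comp hf 1).mul (((diff_comp hg 2).mul (diff_comp hh 0)).sub
      ((diff_comp hg 0).mul (diff_comp hh 2))))).add
    ((diff_comp hf 2).mul (((diff_comp hg 0).mul (diff_comp hh 1)).sub
      ((diff_comp hg 1).mul (diff_comp hh 0))))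

theorem dd_det3 (hf : DifferentiableAt ℝ f p) (hg : DifferentiableAt ℝ g p)
    (hh : DifferentiableAt ℝ h p) (w : ℝ × ℝ) :
    fderiv ℝ (fun q => dot3 (f q) (crossProduct (g q) (h q))) p w
      = dot3 (fderiv ℝ f p w) (crossProduct (g p) (h p))
        + dot3 (f p) (crossProduct (fderiv ℝ g p w) (h p))
        + dot3 (f p) (crossProduct (g p) (fderiv ℝ h p w)) := by
  have e : (fun q => dot3 (f q) (crossProduct (g q) (h q)))
      = fun q => (f q 0 * (g q 1 * h q 2 - g q 2 * h q 1)
          + f q 1 * (g q 2 * h q 0 - g q 0 * h q 2))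
          + f q 2 * (g q 0 * h q 1 - g q 1 * h q 0) := by
    funext q
    simp only [dot3, cross_apply, Fin.sum_univ_three, Matrix.cons_val_zero, Matrix.cons_val_one,
      Matrix.head_cons, Matrix.cons_val_two, Matrix.tail_cons]
  have d01 : DifferentiableAt ℝ (fun q => g q 1 * h q 2 - g q 2 * h q 1) p :=
    ((diff_comp hg 1).mul (diff_comp hh 2)).sub ((diff_comp hg 2).mul (diff_comp hh 1))
  have d02 : DifferentiableAt ℝ (fun q => g q 2 * h q 0 - g q 0 * h q 2) p :=
    ((diff_comp hg 2).mul (diff_comp hh 0)).sub ((diff_comp hg 0).mul (diff_comp hh 2))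
  have d03 : DifferentiableAt ℝ (fun q => g q 0 * h q 1 - g q 1 * h q 0) p :=
    ((diff_comp hg 0).mul (diff_comp hh 1)).sub ((diff_comp hg 1).mul (diff_comp hh 0))
  rw [e, dd_add (((diff_comp hf 0).fun_mul d01).fun_add ((diff_comp hf 1).fun_mul d02))
      ((diff_comp hf 2).fun_mul d03),
    dd_add ((diff_comp hf 0).fun_mul d01) ((diff_comp hf 1).fun_mul d02),
    dd_mul (diff_comp hf 0) d01, dd_mul (diff_comp hf 1) d02, dd_mul (diff_comp hf 2) d03,
    dd_sub ((diff_comp hg 1).fun_mul (diff_comp hh 2)) ((diff_comp hg 2).fun_mul (diff_comp hh 1)),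
    dd_sub ((diff_comp hg 2).fun_mul (diff_comp hh 0)) ((diff_comp hg 0).fun_mul (diff_comp hh 2)),
    dd_sub ((diff_comp hg 0).fun_mul (diff_comp hh 1)) ((diff_comp hg 1).fun_mul (diff_comp hh 0)),
    dd_mul (diff_comp hg 1) (diff_comp hh 2), dd_mul (diff_comp hg 2) (diff_comp hh 1),
    dd_mul (diff_comp hg 2) (diff_comp hh 0), dd_mul (diff_comp hg 0) (diff_comp hh 2),
    dd_mul (diff_comp hg 0) (diff_comp hh 1), dd_mul (diff_comp hg 1) (diff_comp hh 0)]
  simp only [dot3, cross_apply, Fin.sum_univ_three, Matrix.cons_val_zero, Matrix.cons_val_one,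
    Matrix.head_cons, Matrix.cons_val_two, Matrix.tail_cons]
  simp only [dd_apply hf w, dd_apply hg w, dd_apply hh w]
  ring

/-! ### Smoothness of partial derivatives -/

theorem contDiffOn_pd {F : Type*} [NormedAddCommGroup F] [NormedSpace ℝ F]
    {f : ℝ × ℝ → F} {U : Set (ℝ × ℝ)} (hU : IsOpen U)
    (hf : ContDiffOn ℝ (⊤ : ℕ∞) f U) (w : ℝ × ℝ) :
    ContDiffOn ℝ (⊤ : ℕ∞) (fun q => fderiv ℝ f q w) U := by
  have h1 : ContDiffOn ℝ (⊤ : ℕ∞) (fderiv ℝ f) U :=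
    hf.fderiv_of_isOpen hU (by
      rw [show ((1 : WithTop ℕ∞)) = ((1 : ℕ∞) : WithTop ℕ∞) from rfl, ← WithTop.coe_add]
      exact WithTop.coe_le_coe.2 le_top)
  exact (ContinuousLinearMap.apply ℝ F w).contDiff.comp_contDiffOn h1

theorem contDiffOn_pdu {F : Type*} [NormedAddCommGroup F] [NormedSpace ℝ F]
    {f : ℝ × ℝ → F} {U : Set (ℝ × ℝ)} (hU : IsOpen U)
    (hf : ContDiffOn ℝ (⊤ : ℕ∞) f U) : ContDiffOn ℝ (⊤ : ℕ∞) (pdu f) U :=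
  contDiffOn_pd hU hf (1, 0)

theorem contDiffOn_pdv {F : Type*} [NormedAddCommGroup F] [NormedSpace ℝ F]
    {f : ℝ × ℝ → F} {U : Set (ℝ × ℝ)} (hU : IsOpen U)
    (hf : ContDiffOn ℝ (⊤ : ℕ∞) f U) : ContDiffOn ℝ (⊤ : ℕ∞) (pdv f) U :=
  contDiffOn_pd hU hf (0, 1)

theorem diffAt_of_contDiffOn {F : Type*} [NormedAddCommGroup F] [NormedSpace ℝ F]
    {f : ℝ × ℝ → F} {U : Set (ℝ × ℝ)} (hU : IsOpen U)
    (hf : ContDiffOn ℝ (⊤ : ℕ∞) f U) {q : ℝ × ℝ} (hq : q ∈ U) :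
    DifferentiableAt ℝ f q :=
  (hf.contDiffAt (hU.mem_nhds hq)).differentiableAt (by
    simp)

/-! ### Symmetry of second derivatives -/

theorem pdv_pdu_symm {F : Type*} [NormedAddCommGroup F] [NormedSpace ℝ F]
    {f : ℝ × ℝ → F} {U : Set (ℝ × ℝ)} (hU : IsOpen U)
    (hf : ContDiffOn ℝ (⊤ : ℕ∞) f U) {p : ℝ × ℝ} (hp : p ∈ U) :
    pdv (pdu f) p = pdu (pdv f) p := by
  have hfa : ContDiffAt ℝ (⊤ : ℕ∞) f p := hf.contDiffAt (hU.mem_nhds hp)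
  have hsym : IsSymmSndFDerivAt ℝ f p := hfa.isSymmSndFDerivAt (by
    simp only [minSmoothness_of_isRCLikeNormedField]
    rw [show ((2 : WithTop ℕ∞)) = ((2 : ℕ∞) : WithTop ℕ∞) from rfl]
    exact WithTop.coe_le_coe.2 le_top)
  have hd : DifferentiableAt ℝ (fderiv ℝ f) p :=
    (hfa.fderiv_right (m := ((⊤ : ℕ∞) : WithTop ℕ∞)) (by
      rw [show ((1 : WithTop ℕ∞)) = ((1 : ℕ∞) : WithTop ℕ∞) from rfl, ← WithTop.coe_add]
      exact WithTop.coe_le_coe.2 le_top)).differentiableAt (by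
      simp)
  have h1 : ∀ w w' : ℝ × ℝ,
      fderiv ℝ (fun q => fderiv ℝ f q w) p w' = fderiv ℝ (fderiv ℝ f) p w' w := by
    intro w w'
    have hc := ((ContinuousLinearMap.apply ℝ F w).hasFDerivAt
        (x := fderiv ℝ f p)).comp p hd.hasFDerivAt
    calc fderiv ℝ (fun q => fderiv ℝ f q w) p w'
        = fderiv ℝ ((ContinuousLinearMap.apply ℝ F w) ∘ (fderiv ℝ f)) p w' := rfl
      _ = ((ContinuousLinearMap.apply ℝ F w).comp (fderiv ℝ (fderiv ℝ f) p)) w' := by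
          rw [hc.fderiv]
      _ = fderiv ℝ (fderiv ℝ f) p w' w := rfl
  show fderiv ℝ (fun q => fderiv ℝ f q (1, 0)) p (0, 1)
      = fderiv ℝ (fun q => fderiv ℝ f q (0, 1)) p (1, 0)
  rw [h1, h1]
  exact hsym _ _

/-! ### Positivity of `EG - F²` -/

theorem dot3_self_pos {x : Fin 3 → ℝ} (hx : x ≠ 0) : 0 < dot3 x x := by
  obtain ⟨i, hi⟩ := Function.ne_iff.1 hx
  have hi' : x i ≠ 0 := by simpa using hi
  have h0 : 0 < x i * x i := mul_self_pos.2 hi'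
  have hsum : x i * x i ≤ dot3 x x :=
    Finset.single_le_sum (f := fun j => x j * x j)
      (fun j _ => mul_self_nonneg _) (Finset.mem_univ i)
  exact lt_of_lt_of_le h0 hsum

theorem T_pos {a b : Fin 3 → ℝ} (h : LinearIndependent ℝ ![a, b]) :
    0 < dot3 a a * dot3 b b - dot3 a b ^ 2 := by
  rw [linearIndependent_fin2] at h
  simp only [Matrix.cons_val_one, Matrix.head_cons, Matrix.cons_val_zero, ne_eq] at h
  obtain ⟨hb, hab⟩ := h
  have hG : 0 < dot3 b b := dot3_self_pos hb
  set t : ℝ := dot3 a b / dot3 b b with ht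
  have hx : a - t • b ≠ 0 := by
    intro hx
    exact hab t (by rw [sub_eq_zero] at hx; exact hx.symm)
  have h2 : 0 < dot3 (a - t • b) (a - t • b) := dot3_self_pos hx
  have hexp : dot3 (a - t • b) (a - t • b)
      = dot3 a a - 2 * t * dot3 a b + t ^ 2 * dot3 b b := by
    simp only [dot3, Fin.sum_univ_three, Pi.sub_apply, Pi.smul_apply, smul_eq_mul]
    ring
  have key : dot3 a a * dot3 b b - dot3 a b ^ 2
      = dot3 (a - t • b) (a - t • b) * dot3 b b := by
    rw [hexp, ht]
    field_simp
    ring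
  rw [key]
  exact mul_pos h2 hG

theorem dot3_smul_right (c : ℝ) (x y : Fin 3 → ℝ) : dot3 x (c • y) = c * dot3 x y := by
  simp only [dot3, Fin.sum_univ_three, Pi.smul_apply, smul_eq_mul]
  ring

end CMaux

/-- `T = EG - F²` as a function. -/
def Tf (p : ℝ × ℝ) : ℝ := Ec r p * Gc r p - Fc r p ^ 2

/-- `P = ⟨r_uu, r_u × r_v⟩`. -/
def Pf (p : ℝ × ℝ) : ℝ := dot3 (pdu (pdu r) p) (crossProduct (pdu r p) (pdv r p))

/-- `Q = ⟨r_uv, r_u × r_v⟩`. -/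
def Qf (p : ℝ × ℝ) : ℝ := dot3 (pdv (pdu r) p) (crossProduct (pdu r p) (pdv r p))

/-- `R = ⟨r_vv, r_u × r_v⟩`. -/
def Rf (p : ℝ × ℝ) : ℝ := dot3 (pdv (pdv r) p) (crossProduct (pdu r p) (pdv r p))

set_option maxHeartbeats 4000000 in
/-- Peterson's equations (the Codazzi–Mainardi equations) hold for every
smooth immersed parametrized surface `r : U → ℝ³`. -/
theorem peterson_codazzi_mainardi_equations
    (U : Set (ℝ × ℝ)) (hU : IsOpen U)
    (hr : ContDiffOn ℝ (⊤ : ℕ∞) r U)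
    (hind : ∀ p ∈ U, LinearIndependent ℝ ![pdu r p, pdv r p]) :
    ∀ p ∈ U,
      pdv (Δ0 r) p - pdu (Δ1 r) p +
          Γ222 r p * Δ0 r p - 2 * Γ212 r p * Δ1 r p + Γ211 r p * Δ2 r p = 0 ∧
      pdu (Δ2 r) p - pdv (Δ1 r) p +
          Γ122 r p * Δ0 r p - 2 * Γ112 r p * Δ1 r p + Γ111 r p * Δ2 r p = 0 := by
  intro p hp
  have hnhd : U ∈ nhds p := hU.mem_nhds hp
  -- smoothness of the derivatives of r
  have hAc : ContDiffOn ℝ (⊤ : ℕ∞) (pdu r) U := CMaux.contDiffOn_pdu hU hr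
  have hBc : ContDiffOn ℝ (⊤ : ℕ∞) (pdv r) U := CMaux.contDiffOn_pdv hU hr
  have hCc : ContDiffOn ℝ (⊤ : ℕ∞) (pdu (pdu r)) U := CMaux.contDiffOn_pdu hU hAc
  have hDc : ContDiffOn ℝ (⊤ : ℕ∞) (pdv (pdu r)) U := CMaux.contDiffOn_pdv hU hAc
  have hEc2 : ContDiffOn ℝ (⊤ : ℕ∞) (pdv (pdv r)) U := CMaux.contDiffOn_pdv hU hBc
  have hAp : DifferentiableAt ℝ (pdu r) p := CMaux.diffAt_of_contDiffOn hU hAc hp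
  have hBp : DifferentiableAt ℝ (pdv r) p := CMaux.diffAt_of_contDiffOn hU hBc hp
  have hCp : DifferentiableAt ℝ (pdu (pdu r)) p := CMaux.diffAt_of_contDiffOn hU hCc hp
  have hDp : DifferentiableAt ℝ (pdv (pdu r)) p := CMaux.diffAt_of_contDiffOn hU hDc hp
  have hEp : DifferentiableAt ℝ (pdv (pdv r)) p := CMaux.diffAt_of_contDiffOn hU hEc2 hp
  -- symmetry of second and third derivatives
  have hswapfun : Set.EqOn (pdu (pdv r)) (pdv (pdu r)) U := fun q hq =>
    (CMaux.pdv_pdu_symm hU hr hq).symm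
  have hswap : pdu (pdv r) p = pdv (pdu r) p := hswapfun hp
  have hX : pdv (pdu (pdu r)) p = pdu (pdv (pdu r)) p := CMaux.pdv_pdu_symm hU hAc hp
  have hY : pdv (pdu (pdv r)) p = pdu (pdv (pdv r)) p := CMaux.pdv_pdu_symm hU hBc hp
  have hZ : pdv (pdu (pdv r)) p = pdv (pdv (pdu r)) p := by
    have hee : pdu (pdv r) =ᶠ[nhds p] pdv (pdu r) :=
      Filter.eventuallyEq_of_mem hnhd hswapfun
    show fderiv ℝ (pdu (pdv r)) p (0, 1) = fderiv ℝ (pdv (pdu r)) p (0, 1)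
    rw [hee.fderiv_eq]
  have hYZ : pdu (pdv (pdv r)) p = pdv (pdv (pdu r)) p := hY.symm.trans hZ
  -- positivity
  have hTpos : ∀ q ∈ U, 0 < Tf r q := fun q hq => CMaux.T_pos (hind q hq)
  have hTp : 0 < Tf r p := hTpos p hp
  have hTne : Tf r p ≠ 0 := ne_of_gt hTp
  have hWq : ∀ q ∈ U, Wc r q ^ 2 = Tf r q := fun q hq =>
    Real.sq_sqrt (le_of_lt (hTpos q hq))
  have hWpos : ∀ q ∈ U, 0 < Wc r q := fun q hq => Real.sqrt_pos.2 (hTpos q hq)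
  -- the three density functions as quotients
  have hDel0 : ∀ q ∈ U, Δ0 r q = Pf r q / Tf r q := by
    intro q hq
    have hw := hWpos q hq
    have hL : Lc r q = (Wc r q)⁻¹ * Pf r q := by
      simp only [Lc, nc, Pf]
      exact CMaux.dot3_smul_right _ _ _
    show Lc r q / Wc r q = Pf r q / Tf r q
    rw [hL, div_eq_div_iff (ne_of_gt hw) (ne_of_gt (hTpos q hq)), ← hWq q hq]
    field_simp
  have hDel1 : ∀ q ∈ U, Δ1 r q = Qf r q / Tf r q := by
    intro q hq
    have hw := hWpos q hq
    have hL : Mc r q = (Wc r q)⁻¹ * Qf r q := by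
      simp only [Mc, nc, Qf]
      exact CMaux.dot3_smul_right _ _ _
    show Mc r q / Wc r q = Qf r q / Tf r q
    rw [hL, div_eq_div_iff (ne_of_gt hw) (ne_of_gt (hTpos q hq)), ← hWq q hq]
    field_simp
  have hDel2 : ∀ q ∈ U, Δ2 r q = Rf r q / Tf r q := by
    intro q hq
    have hw := hWpos q hq
    have hL : Nc r q = (Wc r q)⁻¹ * Rf r q := by
      simp only [Nc, nc, Rf]
      exact CMaux.dot3_smul_right _ _ _
    show Nc r q / Wc r q = Rf r q / Tf r q
    rw [hL, div_eq_div_iff (ne_of_gt hw) (ne_of_gt (hTpos q hq)), ← hWq q hq]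
    field_simp
  -- differentiability of the scalar quantities
  have hEd : DifferentiableAt ℝ (Ec r) p := CMaux.diff_dot3 hAp hAp
  have hFd : DifferentiableAt ℝ (Fc r) p := CMaux.diff_dot3 hAp hBp
  have hGd : DifferentiableAt ℝ (Gc r) p := CMaux.diff_dot3 hBp hBp
  have hTd : DifferentiableAt ℝ (Tf r) p := (hEd.mul hGd).sub (hFd.pow 2)
  have hPd : DifferentiableAt ℝ (Pf r) p := CMaux.diff_det3 hCp hAp hBp
  have hQd : DifferentiableAt ℝ (Qf r) p := CMaux.diff_det3 hDp hAp hBp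
  have hRd : DifferentiableAt ℝ (Rf r) p := CMaux.diff_det3 hEp hAp hBp
  -- first derivatives of E, F, G
  have hEu : pdu (Ec r) p
      = dot3 (pdu (pdu r) p) (pdu r p) + dot3 (pdu r p) (pdu (pdu r) p) :=
    CMaux.dd_dot3 hAp hAp (1, 0)
  have hEv : pdv (Ec r) p
      = dot3 (pdv (pdu r) p) (pdu r p) + dot3 (pdu r p) (pdv (pdu r) p) :=
    CMaux.dd_dot3 hAp hAp (0, 1)
  have hFu : pdu (Fc r) p
      = dot3 (pdu (pdu r) p) (pdv r p) + dot3 (pdu r p) (pdu (pdv r) p) :=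
    CMaux.dd_dot3 hAp hBp (1, 0)
  have hFv : pdv (Fc r) p
      = dot3 (pdv (pdu r) p) (pdv r p) + dot3 (pdu r p) (pdv (pdv r) p) :=
    CMaux.dd_dot3 hAp hBp (0, 1)
  have hGu : pdu (Gc r) p
      = dot3 (pdu (pdv r) p) (pdv r p) + dot3 (pdv r p) (pdu (pdv r) p) :=
    CMaux.dd_dot3 hBp hBp (1, 0)
  have hGv : pdv (Gc r) p
      = dot3 (pdv (pdv r) p) (pdv r p) + dot3 (pdv r p) (pdv (pdv r) p) :=
    CMaux.dd_dot3 hBp hBp (0, 1)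
  -- derivatives of T
  have hTu : pdu (Tf r) p
      = pdu (Ec r) p * Gc r p + Ec r p * pdu (Gc r) p - 2 * Fc r p * pdu (Fc r) p := by
    have h1 : pdu (Tf r) p
        = pdu (fun q => Ec r q * Gc r q) p - pdu (fun q => Fc r q ^ 2) p :=
      CMaux.dd_sub (hEd.mul hGd) (hFd.pow 2) (1, 0)
    have h2 : pdu (fun q => Ec r q * Gc r q) p
        = pdu (Ec r) p * Gc r p + Ec r p * pdu (Gc r) p := CMaux.dd_mul hEd hGd (1, 0)
    have h3 : pdu (fun q => Fc r q ^ 2) p = 2 * Fc r p * pdu (Fc r) p :=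
      CMaux.dd_pow2 hFd (1, 0)
    rw [h1, h2, h3]
  have hTv : pdv (Tf r) p
      = pdv (Ec r) p * Gc r p + Ec r p * pdv (Gc r) p - 2 * Fc r p * pdv (Fc r) p := by
    have h1 : pdv (Tf r) p
        = pdv (fun q => Ec r q * Gc r q) p - pdv (fun q => Fc r q ^ 2) p :=
      CMaux.dd_sub (hEd.mul hGd) (hFd.pow 2) (0, 1)
    have h2 : pdv (fun q => Ec r q * Gc r q) p
        = pdv (Ec r) p * Gc r p + Ec r p * pdv (Gc r) p := CMaux.dd_mul hEd hGd (0, 1)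
    have h3 : pdv (fun q => Fc r q ^ 2) p = 2 * Fc r p * pdv (Fc r) p :=
      CMaux.dd_pow2 hFd (0, 1)
    rw [h1, h2, h3]
  -- derivatives of P, Q, R
  have hPv : pdv (Pf r) p
      = dot3 (pdv (pdu (pdu r)) p) (crossProduct (pdu r p) (pdv r p))
        + dot3 (pdu (pdu r) p) (crossProduct (pdv (pdu r) p) (pdv r p))
        + dot3 (pdu (pdu r) p) (crossProduct (pdu r p) (pdv (pdv r) p)) :=
    CMaux.dd_det3 hCp hAp hBp (0, 1)
  have hQu : pdu (Qf r) p
      = dot3 (pdu (pdv (pdu r)) p) (crossProduct (pdu r p) (pdv r p))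
        + dot3 (pdv (pdu r) p) (crossProduct (pdu (pdu r) p) (pdv r p))
        + dot3 (pdv (pdu r) p) (crossProduct (pdu r p) (pdu (pdv r) p)) :=
    CMaux.dd_det3 hDp hAp hBp (1, 0)
  have hQv : pdv (Qf r) p
      = dot3 (pdv (pdv (pdu r)) p) (crossProduct (pdu r p) (pdv r p))
        + dot3 (pdv (pdu r) p) (crossProduct (pdv (pdu r) p) (pdv r p))
        + dot3 (pdv (pdu r) p) (crossProduct (pdu r p) (pdv (pdv r) p)) :=
    CMaux.dd_det3 hDp hAp hBp (0, 1)
  have hRu : pdu (Rf r) p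
      = dot3 (pdu (pdv (pdv r)) p) (crossProduct (pdu r p) (pdv r p))
        + dot3 (pdv (pdv r) p) (crossProduct (pdu (pdu r) p) (pdv r p))
        + dot3 (pdv (pdv r) p) (crossProduct (pdu r p) (pdu (pdv r) p)) :=
    CMaux.dd_det3 hEp hAp hBp (1, 0)
  -- derivatives of the density functions
  have hD0v : pdv (Δ0 r) p
      = (pdv (Tf r) p * Pf r p - Tf r p * pdv (Pf r) p) * (-(Tf r p ^ 2)⁻¹) := by
    have hee : Δ0 r =ᶠ[nhds p] fun q => Pf r q / Tf r q := by
      filter_upwards [hnhd] with q hq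
      exact hDel0 q hq
    have h1 : pdv (Δ0 r) p = pdv (fun q => Pf r q / Tf r q) p := by
      show fderiv ℝ (Δ0 r) p (0, 1) = fderiv ℝ (fun q => Pf r q / Tf r q) p (0, 1)
      rw [hee.fderiv_eq]
    rw [h1]
    exact CMaux.dd_div hPd hTd hTne (0, 1)
  have hD1u : pdu (Δ1 r) p
      = (pdu (Tf r) p * Qf r p - Tf r p * pdu (Qf r) p) * (-(Tf r p ^ 2)⁻¹) := by
    have hee : Δ1 r =ᶠ[nhds p] fun q => Qf r q / Tf r q := by
      filter_upwards [hnhd] with q hq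
      exact hDel1 q hq
    have h1 : pdu (Δ1 r) p = pdu (fun q => Qf r q / Tf r q) p := by
      show fderiv ℝ (Δ1 r) p (1, 0) = fderiv ℝ (fun q => Qf r q / Tf r q) p (1, 0)
      rw [hee.fderiv_eq]
    rw [h1]
    exact CMaux.dd_div hQd hTd hTne (1, 0)
  have hD1v : pdv (Δ1 r) p
      = (pdv (Tf r) p * Qf r p - Tf r p * pdv (Qf r) p) * (-(Tf r p ^ 2)⁻¹) := by
    have hee : Δ1 r =ᶠ[nhds p] fun q => Qf r q / Tf r q := by
      filter_upwards [hnhd] with q hq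
      exact hDel1 q hq
    have h1 : pdv (Δ1 r) p = pdv (fun q => Qf r q / Tf r q) p := by
      show fderiv ℝ (Δ1 r) p (0, 1) = fderiv ℝ (fun q => Qf r q / Tf r q) p (0, 1)
      rw [hee.fderiv_eq]
    rw [h1]
    exact CMaux.dd_div hQd hTd hTne (0, 1)
  have hD2u : pdu (Δ2 r) p
      = (pdu (Tf r) p * Rf r p - Tf r p * pdu (Rf r) p) * (-(Tf r p ^ 2)⁻¹) := by
    have hee : Δ2 r =ᶠ[nhds p] fun q => Rf r q / Tf r q := by
      filter_upwards [hnhd] with q hq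
      exact hDel2 q hq
    have h1 : pdu (Δ2 r) p = pdu (fun q => Rf r q / Tf r q) p := by
      show fderiv ℝ (Δ2 r) p (1, 0) = fderiv ℝ (fun q => Rf r q / Tf r q) p (1, 0)
      rw [hee.fderiv_eq]
    rw [h1]
    exact CMaux.dd_div hRd hTd hTne (1, 0)
  constructor
  · rw [hD0v, hD1u]
    simp only [Γ222, Γ212, Γ211]
    rw [hWq p hp, hDel0 p hp, hDel1 p hp, hDel2 p hp]
    rw [hTu, hTv, hPv, hQu, hEu, hEv, hFu, hFv, hGu, hGv, hX, hswap]
    have hBig : (2 * ((dot3 (pdu (pdv (pdu r)) p) (crossProduct (pdu r p) (pdv r p)) + dot3 (pdu (pdu r) p) (crossProduct (pdv (pdu r) p) (pdv r p)) + dot3 (pdu (pdu r) p) (crossProduct (pdu r p) (pdv (pdv r) p))) - (dot3 (pdu (pdv (pdu r)) p) (crossProduct (pdu r p) (pdv r p)) + dot3 (pdv (pdu r) p) (crossProduct (pdu (pdu r) p) (pdv r p)) + dot3 (pdv (pdu r) p) (crossProduct (pdu r p) (pdv (pdu r) p)))) * (Tf r p) - 2 * (Pf r p) * ((dot3 (pdv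 (pdu r) p) (pdu r p) + dot3 (pdu r p) (pdv (pdu r) p)) * (Gc r p) + (Ec r p) * (dot3 (pdv (pdv r) p) (pdv r p) + dot3 (pdv r p) (pdv (pdv r) p)) - 2 * (Fc r p) * (dot3 (pdv (pdu r) p) (pdv r p) + dot3 (pdu r p) (pdv (pdv r) p))) + 2 * (Qf r p) * ((dot3 (pdu (pdu r) p) (pdu r p) + dot3 (pdu r p) (pdu (pdu r) p)) * (Gc r p) + (Ec r p) * (dot3 (pdv (pdu r) p) (pdv r p) + dot3 (pdv r p) (pdv (pdu r) p)) - 2 * (Fc r p) * (dot3 (pdu (pdu r) p) (pdv r p) + dot3 (pdu r p) (pdv (pdu r) p))) + ((Ec r p) * (dot3 (pdv (pdv r) p) (pdv r p) + dot3 (pdv r p) (pdv (pdv r) p)) - 2 * (Fc r p) * (dot3 (pdv (pdu r) p) (pdv r p) + dot3 (pdu r p) (pdv (pdv r) p)) + (Fc r p) * (dot3 (pdv (pdu r) p) (pdv r p) + dot3 (pdv r p) (pdv (pdu r) p))) * (Pf r p) - 2 * ((Ec r p) * (dot3 (pdv (pdu r) p) (pdv r p) + dot3 (pdv r p) (pdv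 (pdu r) p)) - (Fc r p) * (dot3 (pdv (pdu r) p) (pdu r p) + dot3 (pdu r p) (pdv (pdu r) p))) * (Qf r p) + (2 * (Ec r p) * (dot3 (pdu (pdu r) p) (pdv r p) + dot3 (pdu r p) (pdv (pdu r) p)) - (Ec r p) * (dot3 (pdv (pdu r) p) (pdu r p) + dot3 (pdu r p) (pdv (pdu r) p)) - (Fc r p) * (dot3 (pdu (pdu r) p) (pdu r p) + dot3 (pdu r p) (pdu (pdu r) p))) * (Rf r p)) = 0 := by
      simp only [Tf, Pf, Qf, Rf, Ec, Fc, Gc]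
      simp only [dot3, cross_apply, Fin.sum_univ_three, Matrix.cons_val_zero,
        Matrix.cons_val_one, Matrix.head_cons, Matrix.cons_val_two, Matrix.tail_cons]
      ring
    trans ((2 * ((dot3 (pdu (pdv (pdu r)) p) (crossProduct (pdu r p) (pdv r p)) + dot3 (pdu (pdu r) p) (crossProduct (pdv (pdu r) p) (pdv r p)) + dot3 (pdu (pdu r) p) (crossProduct (pdu r p) (pdv (pdv r) p))) - (dot3 (pdu (pdv (pdu r)) p) (crossProduct (pdu r p) (pdv r p)) + dot3 (pdv (pdu r) p) (crossProduct (pdu (pdu r) p) (pdv r p)) + dot3 (pdv (pdu r) p) (crossProduct (pdu r p) (pdv (pdu r) p)))) * (Tf r p) - 2 * (Pf r p) * ((dot3 (pdv (pdu r) p) (pdu r p) + dot3 (pdu r p) (pdv (pdu r) p)) * (Gc r p) + (Ec r p) * (dot3 (pdv (pdv r) p) (pdv r p) + dot3 (pdv r p) (pdv (pdv r) p)) - 2 * (Fc r p) * (dot3 (pdv (pdu r) p) (pdv r p) + dot3 (pdu r p) (pdv (pdv r) p))) + 2 * (Qf r p) * ((dot3 (pdu (pdu r) p) (pdu r p) +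 dot3 (pdu r p) (pdu (pdu r) p)) * (Gc r p) + (Ec r p) * (dot3 (pdv (pdu r) p) (pdv r p) + dot3 (pdv r p) (pdv (pdu r) p)) - 2 * (Fc r p) * (dot3 (pdu (pdu r) p) (pdv r p) + dot3 (pdu r p) (pdv (pdu r) p))) + ((Ec r p) * (dot3 (pdv (pdv r) p) (pdv r p) + dot3 (pdv r p) (pdv (pdv r) p)) - 2 * (Fc r p) * (dot3 (pdv (pdu r) p) (pdv r p) + dot3 (pdu r p) (pdv (pdv r) p)) + (Fc r p) * (dot3 (pdv (pdu r) p) (pdv r p) + dot3 (pdv r p) (pdv (pdu r) p))) * (Pf r p) - 2 * ((Ec r p) * (dot3 (pdv (pdu r) p) (pdv r p) + dot3 (pdv r p) (pdv (pdu r) p)) - (Fc r p) * (dot3 (pdv (pdu r) p) (pdu r p) + dot3 (pdu r p) (pdv (pdu r) p))) * (Qf r p) + (2 * (Ec r p) * (dot3 (pdu (pdu r) p) (pdv r p) + dot3 (pdu r p) (pdv (pdu r) p)) - (Ec r p) * (dot3 (pdv (pdu r) p) (pdu r p) + dot3 (pdu r p) (pdv (pdu r) p)) - (Fc r p) * (dot3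 (pdu (pdu r) p) (pdu r p) + dot3 (pdu r p) (pdu (pdu r) p))) * (Rf r p)) / (2 * Tf r p ^ 2))
    · field_simp
      ring
    · rw [hBig, zero_div]
  · rw [hD2u, hD1v]
    simp only [Γ122, Γ112, Γ111]
    rw [hWq p hp, hDel0 p hp, hDel1 p hp, hDel2 p hp]
    rw [hTu, hTv, hRu, hQv, hEu, hEv, hFu, hFv, hGu, hGv, hYZ, hswap]
    have hBig : (2 * ((dot3 (pdv (pdv (pdu r)) p) (crossProduct (pdu r p) (pdv r p)) + dot3 (pdv (pdv r) p) (crossProduct (pdu (pdu r) p) (pdv r p)) + dot3 (pdv (pdv r) p) (crossProduct (pdu r p) (pdv (pdu r) p))) - (dot3 (pdv (pdv (pdu r)) p) (crossProduct (pdu r p) (pdv r p)) + dot3 (pdv (pdu r) p) (crossProduct (pdv (pdu r) p) (pdv r p)) + dot3 (pdv (pdu r) p) (crossProduct (pdu r p) (pdv (pdv r) p)))) * (Tf r p) - 2 * (Rf r p) * ((dot3 (pdu (pdu r) p) (pdu r p) + dot3 (pdu r p) (pdu (pdu r) p)) * (Gc r p) + (Ec r p) * (dot3 (pdv (pdu r)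 p) (pdv r p) + dot3 (pdv r p) (pdv (pdu r) p)) - 2 * (Fc r p) * (dot3 (pdu (pdu r) p) (pdv r p) + dot3 (pdu r p) (pdv (pdu r) p))) + 2 * (Qf r p) * ((dot3 (pdv (pdu r) p) (pdu r p) + dot3 (pdu r p) (pdv (pdu r) p)) * (Gc r p) + (Ec r p) * (dot3 (pdv (pdv r) p) (pdv r p) + dot3 (pdv r p) (pdv (pdv r) p)) - 2 * (Fc r p) * (dot3 (pdv (pdu r) p) (pdv r p) + dot3 (pdu r p) (pdv (pdv r) p))) + (2 * (Gc r p) * (dot3 (pdv (pdu r) p) (pdv r p) + dot3 (pdu r p) (pdv (pdv r) p)) - (Gc r p) * (dot3 (pdv (pdu r) p) (pdv r p) + dot3 (pdv r p) (pdv (pdu r) p)) - (Fc r p) * (dot3 (pdv (pdv r) p) (pdv r p) + dot3 (pdv r p) (pdv (pdv r) p))) * (Pf r p) - 2 * ((Gc r p) * (dot3 (pdv (pdu r) p) (pdu r p) + dot3 (pdu r p) (pdv (pdu r) p)) - (Fc r p) * (dot3 (pdv (pdu r) p) (pdv r p) + dot3 (pdv r p) (pdv (pdu r) p))) * (Qf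 r p) + ((Gc r p) * (dot3 (pdu (pdu r) p) (pdu r p) + dot3 (pdu r p) (pdu (pdu r) p)) - 2 * (Fc r p) * (dot3 (pdu (pdu r) p) (pdv r p) + dot3 (pdu r p) (pdv (pdu r) p)) + (Fc r p) * (dot3 (pdv (pdu r) p) (pdu r p) + dot3 (pdu r p) (pdv (pdu r) p))) * (Rf r p)) = 0 := by
      simp only [Tf, Pf, Qf, Rf, Ec, Fc, Gc]
      simp only [dot3, cross_apply, Fin.sum_univ_three, Matrix.cons_val_zero,
        Matrix.cons_val_one, Matrix.head_cons, Matrix.cons_val_two, Matrix.tail_cons]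
      ring
    trans ((2 * ((dot3 (pdv (pdv (pdu r)) p) (crossProduct (pdu r p) (pdv r p)) + dot3 (pdv (pdv r) p) (crossProduct (pdu (pdu r) p) (pdv r p)) + dot3 (pdv (pdv r) p) (crossProduct (pdu r p) (pdv (pdu r) p))) - (dot3 (pdv (pdv (pdu r)) p) (crossProduct (pdu r p) (pdv r p)) + dot3 (pdv (pdu r) p) (crossProduct (pdv (pdu r) p) (pdv r p)) + dot3 (pdv (pdu r) p) (crossProduct (pdu r p) (pdv (pdv r) p)))) * (Tf r p) - 2 * (Rf r p) * ((dot3 (pdu (pdu r) p) (pdu r p) + dot3 (pdu r p) (pdu (pdu r) p)) * (Gc r p) + (Ec r p) * (dot3 (pdv (pdu r) p) (pdv r p) + dot3 (pdv r p) (pdv (pdu r) p)) - 2 * (Fc r p) * (dot3 (pdu (pdu r) p) (pdv r p) + dot3 (pdu r p) (pdv (pdu r) p))) + 2 * (Qf r p) * ((dot3 (pdv (pdu r) p) (pdu r p) + dot3 (pdu r p) (pdv (pdu r) p)) * (Gc r p) + (Ec r p) * (dot3 (pdv (pdv r) p) (pdv r p) + dot3 (pdv r p) (pdv (pdv r) p))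 - 2 * (Fc r p) * (dot3 (pdv (pdu r) p) (pdv r p) + dot3 (pdu r p) (pdv (pdv r) p))) + (2 * (Gc r p) * (dot3 (pdv (pdu r) p) (pdv r p) + dot3 (pdu r p) (pdv (pdv r) p)) - (Gc r p) * (dot3 (pdv (pdu r) p) (pdv r p) + dot3 (pdv r p) (pdv (pdu r) p)) - (Fc r p) * (dot3 (pdv (pdv r) p) (pdv r p) + dot3 (pdv r p) (pdv (pdv r) p))) * (Pf r p) - 2 * ((Gc r p) * (dot3 (pdv (pdu r) p) (pdu r p) + dot3 (pdu r p) (pdv (pdu r) p)) - (Fc r p) * (dot3 (pdv (pdu r) p) (pdv r p) + dot3 (pdv r p) (pdv (pdu r) p))) * (Qf r p) + ((Gc r p) * (dot3 (pdu (pdu r) p) (pdu r p) + dot3 (pdu r p) (pdu (pdu r) p)) - 2 * (Fc r p) * (dot3 (pdu (pdu r) p) (pdv r p) + dot3 (pdu r p) (pdv (pdu r) p)) + (Fc r p) * (dot3 (pdv (pdu r) p) (pdu r p) + dot3 (pdu r p) (pdv (pdu r) p))) * (Rf r p)) / (2 * Tf r p ^ 2))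
    · field_simp
      ring
    · rw [hBig, zero_div]

end
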